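/- Let I be a compact interval and f : I → X with ‖f'(x)‖ ≥ i > 0 and ‖f''(x)‖ ≤ M for all x ∈ I. Let F be an arc-length parametrization of f (i.e. F = f ∘ v_f^{-1} where v_f(x) = V(f,[min I, x])). If F''(z) exists at a point z, then ‖F''(z)‖ ≤ 2M/i². -/

import Mathlib

open MeasureTheory Set Filter Topology

/-- Lemma: if `‖f'‖ ≥ i > 0` and `‖f''‖ ≤ M` on a compact interval `I = [a,b]`, and
`F = f ∘ v_f⁻¹` is the arc-length parametrization (encoded by `F (v_f x) = f x`),
then any existing second derivative of `F` satisfies `‖F''(z)‖ ≤ 2M/i²`. -/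
theorem stmt_9 {X : Type*} [NormedAddCommGroup X] [NormedSpace ℝ X]
    (a b : ℝ) (hab : a < b) (f f' f'' : ℝ → X)
    (hf' : ∀ x ∈ Set.Icc a b, HasDerivWithinAt f (f' x) (Set.Icc a b) x)
    (hf'' : ∀ x ∈ Set.Icc a b, HasDerivWithinAt f' (f'' x) (Set.Icc a b) x)
    (i M : ℝ) (hi : 0 < i)
    (hlow : ∀ x ∈ Set.Icc a b, i ≤ ‖f' x‖)
    (hupp : ∀ x ∈ Set.Icc a b, ‖f'' x‖ ≤ M)
    (vf : ℝ → ℝ) (hvf : ∀ x ∈ Set.Icc a b, vf x = (eVariationOn f (Set.Icc a x)).toReal)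
    (ℓ : ℝ) (hl : ℓ = vf b)
    (F F' : ℝ → X)
    (hF : ∀ x ∈ Set.Icc a b, F (vf x) = f x)
    (hF' : ∀ y ∈ Set.Icc 0 ℓ, HasDerivWithinAt F (F' y) (Set.Icc 0 ℓ) y)
    (z : ℝ) (hz : z ∈ Set.Icc 0 ℓ) (F''z : X)
    (hF'' : HasDerivWithinAt F' F''z (Set.Icc 0 ℓ) z) :
    ‖F''z‖ ≤ 2 * M / i ^ 2 := by
  set s : Set ℝ := Set.Icc a b with hs
  have hab' : a ≤ b := hab.le
  have has : a ∈ s := ⟨le_rfl, hab'⟩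
  have hbs : b ∈ s := ⟨hab', le_rfl⟩
  have hM0 : 0 ≤ M := le_trans (norm_nonneg _) (hupp a has)
  have hsconv : Convex ℝ s := convex_Icc a b
  -- f' is M-Lipschitz on s
  have hf'lip : ∀ x ∈ s, ∀ y ∈ s, ‖f' y - f' x‖ ≤ M * |y - x| := by
    intro x hx y hy
    simpa [Real.norm_eq_abs] using
      hsconv.norm_image_sub_le_of_norm_hasDerivWithin_le hf''
        (fun t ht => hupp t ht) hx hy
  -- variation bound from a derivative bound
  have hvar_le : ∀ (K u v : ℝ), 0 ≤ K → u ≤ v → Set.Icc u v ⊆ s →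
      (∀ t ∈ Set.Icc u v, ‖f' t‖ ≤ K) →
      eVariationOn f (Set.Icc u v) ≤ ENNReal.ofReal (K * (v - u)) := by
    intro K u v hK huv hsub hbound
    have hlip : LipschitzOnWith K.toNNReal f (Set.Icc u v) :=
      (convex_Icc u v).lipschitzOnWith_of_nnnorm_hasDerivWithin_le
        (fun t ht => (hf' t (hsub ht)).mono hsub)
        (fun t ht => by
          rw [← NNReal.coe_le_coe, coe_nnnorm, Real.coe_toNNReal K hK]
          exact hbound t ht)
    have h1 : eVariationOn (f ∘ id) (Set.Icc u v) ≤
        K.toNNReal * eVariationOn id (Set.Icc u v) :=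
      hlip.comp_eVariationOn_le (Set.mapsTo_id _)
    have h2 : eVariationOn (id : ℝ → ℝ) (Set.Icc u v) ≤ ENNReal.ofReal (v - u) := by
      have h3 := (monotoneOn_id (s := Set.Icc u v)).eVariationOn_le
        (a := u) (b := v) ⟨le_rfl, huv⟩ ⟨huv, le_rfl⟩
      simpa using h3
    calc eVariationOn f (Set.Icc u v) = eVariationOn (f ∘ id) (Set.Icc u v) := rfl
      _ ≤ K.toNNReal * eVariationOn id (Set.Icc u v) := h1
      _ ≤ K.toNNReal * ENNReal.ofReal (v - u) := by gcongr
      _ = ENNReal.ofReal (K * (v - u)) := by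
          rw [ENNReal.ofReal_mul hK]; rfl
  have hLbound : ∀ u v : ℝ, Set.Icc u v ⊆ s → ∀ t ∈ Set.Icc u v,
      ‖f' t‖ ≤ ‖f' a‖ + M * (b - a) := by
    intro u v hsub t ht
    have h1 := (hsub ht).1
    have h2 := (hsub ht).2
    have habs : |t - a| ≤ b - a := by
      rw [abs_of_nonneg (by linarith)]; linarith
    have h3 : ‖f' t‖ ≤ ‖f' a‖ + ‖f' t - f' a‖ := by
      simpa using norm_add_le (f' a) (f' t - f' a)
    have h4 : M * |t - a| ≤ M * (b - a) := mul_le_mul_of_nonneg_left habs hM0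
    linarith [hf'lip a has t (hsub ht)]
  have hvfin : ∀ u v : ℝ, Set.Icc u v ⊆ s → eVariationOn f (Set.Icc u v) ≠ ⊤ := by
    intro u v hsub
    rcases le_or_gt u v with h | h
    · exact ne_top_of_le_ne_top ENNReal.ofReal_ne_top
        (hvar_le _ u v (add_nonneg (norm_nonneg _) (mul_nonneg hM0 (by linarith)))
          h hsub (hLbound u v hsub))
    · rw [Set.Icc_eq_empty (not_le.mpr h),
        eVariationOn.subsingleton f Set.subsingleton_empty]
      simp
  -- additivity
  have hadd : ∀ x ∈ s, ∀ y ∈ s, x ≤ y →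
      vf y = vf x + (eVariationOn f (Set.Icc x y)).toReal := by
    intro x hx y hy hxy
    rw [hvf y hy, hvf x hx]
    have key : eVariationOn f (Set.Icc a x) + eVariationOn f (Set.Icc x y)
        = eVariationOn f (Set.Icc a y) := by
      have h := eVariationOn.Icc_add_Icc f (s := Set.univ) hx.1 hxy (Set.mem_univ x)
      simpa using h
    rw [← key, ENNReal.toReal_add
      (hvfin a x (Set.Icc_subset_Icc le_rfl hx.2))
      (hvfin x y (Set.Icc_subset_Icc hx.1 hy.2))]
  have hvfa : vf a = 0 := by
    rw [hvf a has, Set.Icc_self, eVariationOn.subsingleton f subsingleton_singleton]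
    simp
  have hmono : ∀ x ∈ s, ∀ y ∈ s, x ≤ y → vf x ≤ vf y := by
    intro x hx y hy hxy
    rw [hadd x hx y hy hxy]
    exact le_add_of_nonneg_right ENNReal.toReal_nonneg
  have hmaps : Set.MapsTo vf s (Set.Icc 0 ℓ) := by
    intro x hx
    exact ⟨hvfa ▸ hmono a has x hx hx.1, hl ▸ hmono x hx b hbs hx.2⟩
  -- the derivative of vf
  have hvf' : ∀ x ∈ s, HasDerivWithinAt vf ‖f' x‖ s x := by
    intro x₀ hx₀
    rw [hasDerivWithinAt_iff_tendsto_slope]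
    have hlo : Tendsto (fun x => ‖slope f x₀ x‖) (𝓝[s \ {x₀}] x₀) (𝓝 ‖f' x₀‖) :=
      (hasDerivWithinAt_iff_tendsto_slope.1 (hf' x₀ hx₀)).norm
    have hhi : Tendsto (fun x => ‖f' x₀‖ + M * |x - x₀|) (𝓝[s \ {x₀}] x₀) (𝓝 ‖f' x₀‖) := by
      have h1 : Tendsto (fun x : ℝ => ‖f' x₀‖ + M * |x - x₀|) (𝓝 x₀)
          (𝓝 (‖f' x₀‖ + M * |x₀ - x₀|)) :=
        (((continuous_id.sub continuous_const).abs.tendsto x₀).const_mul M).const_add _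
      simp only [sub_self, abs_zero, mul_zero, add_zero] at h1
      exact h1.mono_left nhdsWithin_le_nhds
    have hbounds : ∀ x ∈ s \ {x₀}, ‖slope f x₀ x‖ ≤ slope vf x₀ x ∧
        slope vf x₀ x ≤ ‖f' x₀‖ + M * |x - x₀| := by
      rintro x ⟨hxs, hxne⟩
      have hxne' : x ≠ x₀ := hxne
      set u := min x x₀ with hu
      set v := max x x₀ with hv
      have huv : u ≤ v := min_le_max
      have hsub2 : Set.Icc u v ⊆ s := by
        apply Set.Icc_subset_Icc
        · exact le_min hxs.1 hx₀.1
        · exact max_le hxs.2 hx₀.2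
      have hxmem : x ∈ Set.Icc u v := ⟨min_le_left _ _, le_max_left _ _⟩
      have hx₀mem : x₀ ∈ Set.Icc u v := ⟨min_le_right _ _, le_max_right _ _⟩
      have hvu : v - u = |x - x₀| := by
        rcases le_or_gt x x₀ with h | h
        · rw [hu, hv, min_eq_left h, max_eq_right h, abs_of_nonpos (by linarith)]; ring
        · rw [hu, hv, min_eq_right h.le, max_eq_left h.le, abs_of_pos (by linarith)]
      have hvu0 : 0 < v - u := by
        rw [hvu]; exact abs_pos.2 (sub_ne_zero.2 hxne')
      set D := (eVariationOn f (Set.Icc u v)).toReal with hD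
      have hslope : slope vf x₀ x = D / (v - u) := by
        rcases le_or_gt x x₀ with h | h
        · have hx' : x < x₀ := lt_of_le_of_ne h hxne'
          have hu' : u = x := min_eq_left h
          have hv' : v = x₀ := max_eq_right h
          have hadd' : vf x₀ = vf x + D := by
            rw [hD, hu', hv']; exact hadd x hxs x₀ hx₀ h
          have hne0 : x - x₀ ≠ 0 := sub_ne_zero.2 hxne'
          have hne1 : x₀ - x ≠ 0 := sub_ne_zero.2 (Ne.symm hxne')
          rw [slope_def_field, hadd', hu', hv', div_eq_div_iff hne0 hne1]
          ring
        · have hu' : u = x₀ := min_eq_right h.le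
          have hv' : v = x := max_eq_left h.le
          have hadd' : vf x = vf x₀ + D := by
            rw [hD, hu', hv']; exact hadd x₀ hx₀ x hxs h.le
          have hne0 : x - x₀ ≠ 0 := sub_ne_zero.2 hxne'
          rw [slope_def_field, hadd', hu', hv', div_eq_div_iff hne0 hne0]
          ring
      constructor
      · -- lower bound
        have hdist : dist (f x) (f x₀) ≤ D :=
          BoundedVariationOn.dist_le (hvfin u v hsub2) hxmem hx₀mem
        have hsn : ‖slope f x₀ x‖ = dist (f x) (f x₀) / (v - u) := by
          rw [slope_def_module, norm_smul, Real.norm_eq_abs, abs_inv,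
            dist_eq_norm, hvu, div_eq_inv_mul]
        rw [hsn, hslope]
        exact (div_le_div_iff_of_pos_right hvu0).mpr hdist
      · -- upper bound
        have hK0 : 0 ≤ ‖f' x₀‖ + M * |x - x₀| :=
          add_nonneg (norm_nonneg _) (mul_nonneg hM0 (abs_nonneg _))
        have hKb : ∀ t ∈ Set.Icc u v, ‖f' t‖ ≤ ‖f' x₀‖ + M * |x - x₀| := by
          intro t ht
          have h3 : ‖f' t‖ ≤ ‖f' x₀‖ + ‖f' t - f' x₀‖ := by
            simpa using norm_add_le (f' x₀) (f' t - f' x₀)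
          have habs : |t - x₀| ≤ |x - x₀| := by
            rw [← hvu]
            rw [abs_le]
            constructor
            · linarith [ht.1, hx₀mem.2]
            · linarith [ht.2, hx₀mem.1]
          have h4 : M * |t - x₀| ≤ M * |x - x₀| := mul_le_mul_of_nonneg_left habs hM0
          linarith [hf'lip x₀ hx₀ t (hsub2 ht)]
        have hvle := hvar_le _ u v hK0 huv hsub2 hKb
        have hDle : D ≤ (‖f' x₀‖ + M * |x - x₀|) * (v - u) :=
          ENNReal.toReal_le_of_le_ofReal (mul_nonneg hK0 hvu0.le) hvle
        rw [hslope, div_le_iff₀ hvu0]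
        exact hDle
    refine tendsto_of_tendsto_of_tendsto_of_le_of_le' hlo hhi ?_ ?_
    · filter_upwards [self_mem_nhdsWithin] with x hx using (hbounds x hx).1
    · filter_upwards [self_mem_nhdsWithin] with x hx using (hbounds x hx).2
  -- vf is continuous on s, IVT
  have hcont : ContinuousOn vf s := fun x hx => (hvf' x hx).continuousWithinAt
  obtain ⟨x₀, hx₀s, hvfx₀⟩ : ∃ x₀ ∈ s, vf x₀ = z := by
    have : z ∈ Set.Icc (vf a) (vf b) := by rw [hvfa, ← hl]; exact hz
    obtain ⟨x₀, h1, h2⟩ := intermediate_value_Icc hab' hcont this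
    exact ⟨x₀, h1, h2⟩
  -- unit tangent identity
  have hgx : ∀ x ∈ s, f' x = ‖f' x‖ • F' (vf x) := by
    intro x hx
    have hcomp : HasDerivWithinAt (F ∘ vf) (‖f' x‖ • F' (vf x)) s x :=
      (hF' (vf x) (hmaps hx)).scomp x (hvf' x hx) hmaps
    have hcomp' : HasDerivWithinAt f (‖f' x‖ • F' (vf x)) s x :=
      hcomp.congr (fun y hy => (hF y hy).symm) ((hF x hx).symm)
    exact ((uniqueDiffOn_Icc hab) x hx).eq_deriv s (hf' x hx) hcomp'
  have hfx₀i : i ≤ ‖f' x₀‖ := hlow x₀ hx₀s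
  have hfx₀pos : (0:ℝ) < ‖f' x₀‖ := lt_of_lt_of_le hi hfx₀i
  set g : ℝ → X := fun x => F' (vf x) with hgdef
  have hgnorm : ‖g x₀‖ = 1 := by
    have h1 : ‖f' x₀‖ = ‖f' x₀‖ * ‖g x₀‖ := by
      conv_lhs => rw [hgx x₀ hx₀s]
      rw [norm_smul, Real.norm_eq_abs, abs_of_nonneg (norm_nonneg _)]
    have h2 : ‖f' x₀‖ * ‖g x₀‖ = ‖f' x₀‖ * 1 := by rw [mul_one, ← h1]
    exact mul_left_cancel₀ hfx₀pos.ne' h2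
  have hgd : HasDerivWithinAt g (‖f' x₀‖ • F''z) s x₀ := by
    have := hvfx₀ ▸ hF''
    exact this.scomp x₀ (hvf' x₀ hx₀s) hmaps
  -- dual functional
  have hgne : g x₀ ≠ 0 := by
    intro h; rw [h, norm_zero] at hgnorm; norm_num at hgnorm
  obtain ⟨φ, hφnorm, hφg⟩ := exists_dual_vector ℝ (g x₀) (norm_ne_zero_iff.mpr hgne)
  -- derivative of the norm of f'
  obtain ⟨d, hud, hdM⟩ : ∃ d : ℝ, HasDerivWithinAt (fun x => ‖f' x‖) d s x₀ ∧ |d| ≤ M := by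
    have hwd : HasDerivWithinAt (fun x => φ (g x)) (φ (‖f' x₀‖ • F''z)) s x₀ :=
      φ.hasFDerivAt.comp_hasDerivWithinAt x₀ hgd
    have hw0 : φ (g x₀) = 1 := by rw [hφg, hgnorm]; norm_num
    have hw0' : φ (g x₀) ≠ 0 := by rw [hw0]; norm_num
    have hne : ∀ᶠ x in 𝓝[s] x₀, φ (g x) ≠ 0 := by
      have hmem : {y : ℝ | y ≠ 0} ∈ 𝓝 (φ (g x₀)) := by
        rw [hw0]
        exact isOpen_compl_singleton.mem_nhds (by norm_num)
      exact hwd.continuousWithinAt hmem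
    have hfd : HasDerivWithinAt (fun x => φ (f' x)) (φ (f'' x₀)) s x₀ :=
      φ.hasFDerivAt.comp_hasDerivWithinAt x₀ (hf'' x₀ hx₀s)
    have hdiv := hfd.div hwd hw0'
    have heq : ∀ x ∈ s, φ (g x) ≠ 0 → ‖f' x‖ = φ (f' x) / φ (g x) := by
      intro x hxs hwne
      have h1 : φ (f' x) = ‖f' x‖ * φ (g x) := by
        conv_lhs => rw [hgx x hxs]
        simp [_root_.map_smul, smul_eq_mul]
        exact Or.inl rfl
      rw [h1, mul_div_assoc, div_self hwne, mul_one]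
    have hev : (fun x => ‖f' x‖) =ᶠ[𝓝[s] x₀] fun x => φ (f' x) / φ (g x) := by
      filter_upwards [hne, self_mem_nhdsWithin] with x h1 h2 using heq x h2 h1
    have hud : HasDerivWithinAt (fun x => ‖f' x‖) _ s x₀ :=
      hdiv.congr_of_eventuallyEq hev (heq x₀ hx₀s hw0')
    refine ⟨_, hud, ?_⟩
    -- bound the derivative by the Lipschitz constant of ‖f'‖
    have hNB : (𝓝[s \ {x₀}] x₀).NeBot := by
      rcases lt_or_eq_of_le hx₀s.2 with h | h
      · have h1 : Set.Ioc x₀ b ⊆ s \ {x₀} := by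
          rintro t ⟨h2, h3⟩
          exact ⟨⟨le_trans hx₀s.1 h2.le, h3⟩, ne_of_gt h2⟩
        exact (left_nhdsWithin_Ioc_neBot h).mono (nhdsWithin_mono x₀ h1)
      · have h0 : a < x₀ := h ▸ hab
        have h1 : Set.Ico a x₀ ⊆ s \ {x₀} := by
          rintro t ⟨h2, h3⟩
          exact ⟨⟨h2, le_trans h3.le (h ▸ le_rfl)⟩, ne_of_lt h3⟩
        exact (right_nhdsWithin_Ico_neBot h0).mono (nhdsWithin_mono x₀ h1)
    have htd := (hasDerivWithinAt_iff_tendsto_slope.1 hud).abs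
    refine le_of_tendsto htd ?_
    filter_upwards [self_mem_nhdsWithin] with x hx
    obtain ⟨hxs, hxne⟩ := hx
    have hxne' : x ≠ x₀ := hxne
    have habs0 : (0:ℝ) < |x - x₀| := abs_pos.2 (sub_ne_zero.2 hxne')
    rw [slope_def_field, abs_div, div_le_iff₀ habs0]
    calc |‖f' x‖ - ‖f' x₀‖| ≤ ‖f' x - f' x₀‖ := abs_norm_sub_norm_le _ _
      _ ≤ M * |x - x₀| := hf'lip x₀ hx₀s x hxs
  -- product rule and uniqueness
  have hprod : HasDerivWithinAt (fun x => ‖f' x‖ • g x)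
      (‖f' x₀‖ • (‖f' x₀‖ • F''z) + d • g x₀) s x₀ := hud.smul hgd
  have hkey : f'' x₀ = ‖f' x₀‖ • (‖f' x₀‖ • F''z) + d • g x₀ := by
    have h2 : HasDerivWithinAt (fun x => ‖f' x‖ • g x) (f'' x₀) s x₀ :=
      (hf'' x₀ hx₀s).congr (fun y hy => (hgx y hy).symm) ((hgx x₀ hx₀s).symm)
    exact ((uniqueDiffOn_Icc hab) x₀ hx₀s).eq_deriv s h2 hprod
  -- final computation
  have hnorm1 : ‖f' x₀‖ ^ 2 * ‖F''z‖ ≤ 2 * M := by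
    have h3 : ‖f' x₀‖ • (‖f' x₀‖ • F''z) = f'' x₀ - d • g x₀ := by
      rw [hkey]; abel
    calc ‖f' x₀‖ ^ 2 * ‖F''z‖ = ‖‖f' x₀‖ • (‖f' x₀‖ • F''z)‖ := by
          rw [norm_smul, norm_smul, Real.norm_eq_abs, abs_of_nonneg (norm_nonneg _)]; ring
      _ = ‖f'' x₀ - d • g x₀‖ := by rw [h3]
      _ ≤ ‖f'' x₀‖ + ‖d • g x₀‖ := norm_sub_le _ _
      _ ≤ M + |d| * 1 := by
          rw [norm_smul, Real.norm_eq_abs, hgnorm]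
          exact add_le_add (hupp x₀ hx₀s) le_rfl
      _ ≤ M + M := by linarith
      _ = 2 * M := by ring
  have hi2 : (0:ℝ) < i ^ 2 := by positivity
  rw [le_div_iff₀ hi2]
  have hpow : i ^ 2 ≤ ‖f' x₀‖ ^ 2 := by nlinarith
  calc ‖F''z‖ * i ^ 2 ≤ ‖F''z‖ * ‖f' x₀‖ ^ 2 := by
        exact mul_le_mul_of_nonneg_left hpow (norm_nonneg _)
    _ = ‖f' x₀‖ ^ 2 * ‖F''z‖ := by ring
    _ ≤ 2 * M := hnorm1
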